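/- arXiv:2501.10263 — 3 statements merged into one kernel-verified Lean document; each statement's English description precedes it below -/
import Mathlib

section
/- Let X be a random real p×k matrix (a measurable map from a probability space to the space of p×k real matrices) such that XᵀX is positive definite almost surely. Let L be a fixed p×p orthogonal matrix and R a fixed k×k orthogonal matrix, and suppose LXR has the same distribution as X (the pushforward laws agree). Then L Q_X R has the same distribution as Q_X, where Q_X = X(XᵀX)^{-1/2} is the polar factor of X. -/
open Matrix

/-- `XᵀX` is always positive semidefinite for a real matrix `X`. -/
lemma posSemidef_transpose_mul_self {p k : ℕ} (X : Matrix (Fin p) (Fin k) ℝ) :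
    (Xᵀ * X).PosSemidef := by
  rw [← Matrix.conjTranspose_eq_transpose_of_trivial]
  exact Matrix.posSemidef_conjTranspose_mul_self X

open scoped MatrixOrder in
/-- The polar factor `Q_X = X (XᵀX)^{-1/2}` of a real `p × k` matrix `X`, where
`(XᵀX)^{-1/2}` is the inverse of the unique symmetric positive semidefinite square root
of `XᵀX`. -/
noncomputable def polarFactor {p k : ℕ} (X : Matrix (Fin p) (Fin k) ℝ) :
    Matrix (Fin p) (Fin k) ℝ :=
  X * (CFC.sqrt (Xᵀ * X))⁻¹


open MeasureTheory

noncomputable instance matrixMeasurableSpace {p k : ℕ} :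
    MeasurableSpace (Matrix (Fin p) (Fin k) ℝ) :=
  show MeasurableSpace ((Fin p) → (Fin k) → ℝ) from inferInstance

namespace PolarAux

open Set

open scoped MatrixOrder

instance {p k : ℕ} : PolishSpace (Matrix (Fin p) (Fin k) ℝ) :=
  inferInstanceAs (PolishSpace ((Fin p) → (Fin k) → ℝ))

instance {p k : ℕ} : BorelSpace (Matrix (Fin p) (Fin k) ℝ) :=
  inferInstanceAs (BorelSpace ((Fin p) → (Fin k) → ℝ))

lemma isClosed_posSemidef {k : ℕ} :
    IsClosed {A : Matrix (Fin k) (Fin k) ℝ | A.PosSemidef} := by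
  have : {A : Matrix (Fin k) (Fin k) ℝ | A.PosSemidef}
      = {A : Matrix (Fin k) (Fin k) ℝ | Aᴴ = A}
        ∩ ⋂ x : Fin k → ℝ, {A : Matrix (Fin k) (Fin k) ℝ | 0 ≤ star x ⬝ᵥ A *ᵥ x} := by
    ext A
    simp [Matrix.posSemidef_iff_dotProduct_mulVec, Matrix.IsHermitian, Set.mem_iInter]
  rw [this]
  refine (isClosed_eq ?_ continuous_id).inter (isClosed_iInter fun x => isClosed_le
    continuous_const (Continuous.dotProduct continuous_const
      (continuous_id.matrix_mulVec continuous_const)))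
  exact continuous_id.matrix_conjTranspose

open Classical in
/-- Total (junk-valued) version of the PSD matrix square root. -/
noncomputable def sqrtFun {k : ℕ} (A : Matrix (Fin k) (Fin k) ℝ) :
    Matrix (Fin k) (Fin k) ℝ :=
  if h : A.PosSemidef then CFC.sqrt A else 0

lemma sqrtFun_eq {k : ℕ} {A : Matrix (Fin k) (Fin k) ℝ} (h : A.PosSemidef) :
    sqrtFun A = CFC.sqrt A := by
  rw [sqrtFun, dif_pos h]

lemma measurable_sqrtFun {k : ℕ} :
    Measurable (sqrtFun : Matrix (Fin k) (Fin k) ℝ → Matrix (Fin k) (Fin k) ℝ) := by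
  set S : Set (Matrix (Fin k) (Fin k) ℝ) := {A | A.PosSemidef} with hS_def
  have hSmeas : MeasurableSet S := isClosed_posSemidef.measurableSet
  have hcont : ContinuousOn (fun Y : Matrix (Fin k) (Fin k) ℝ => Y * Y) S :=
    (continuous_id.matrix_mul continuous_id).continuousOn
  have hinj : S.InjOn (fun Y : Matrix (Fin k) (Fin k) ℝ => Y * Y) := by
    intro A hA B hB hAB
    have hAB' : A * A = B * B := hAB
    rw [← CFC.sqrt_mul_self A hA.nonneg, hAB', CFC.sqrt_mul_self B hB.nonneg]
  have emb := hcont.measurableEmbedding hSmeas hinj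
  intro u hu
  have him : MeasurableSet ((S.restrict fun Y => Y * Y) '' (Subtype.val ⁻¹' u)) :=
    emb.measurableSet_image' (measurable_subtype_coe hu)
  have key : ∀ A : Matrix (Fin k) (Fin k) ℝ, A.PosSemidef →
      (A ∈ sqrtFun ⁻¹' u ↔ A ∈ (S.restrict fun Y => Y * Y) '' (Subtype.val ⁻¹' u)) := by
    intro A hA
    constructor
    · intro h
      refine ⟨⟨CFC.sqrt A, (CFC.sqrt_nonneg A).posSemidef⟩, ?_, ?_⟩
      · simpa [sqrtFun_eq hA] using h
      · simp [Set.restrict, CFC.sqrt_mul_sqrt_self A hA.nonneg]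
    · rintro ⟨⟨Y, hY⟩, hYu, hYA⟩
      simp only [Set.restrict] at hYA
      have : Y = CFC.sqrt A := by
        exact (CFC.sqrt_unique hYA hY.nonneg).symm
      simpa [Set.mem_preimage, sqrtFun_eq hA, ← this] using hYu
  by_cases h0 : (0 : Matrix (Fin k) (Fin k) ℝ) ∈ u
  · have : sqrtFun ⁻¹' u = ((S.restrict fun Y => Y * Y) '' (Subtype.val ⁻¹' u)) ∪ Sᶜ := by
      ext A
      by_cases hA : A.PosSemidef
      · simp only [Set.mem_union, key A hA]
        simp [hS_def, hA]
      · have : sqrtFun A = 0 := by rw [sqrtFun, dif_neg hA]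
        simp [Set.mem_preimage, this, h0, hS_def, hA]
    rw [this]
    exact him.union hSmeas.compl
  · have : sqrtFun ⁻¹' u = (S.restrict fun Y => Y * Y) '' (Subtype.val ⁻¹' u) := by
      ext A
      by_cases hA : A.PosSemidef
      · exact key A hA
      · have h1 : sqrtFun A = 0 := by rw [sqrtFun, dif_neg hA]
        constructor
        · intro h; exact absurd (by simpa [h1] using h) h0
        · rintro ⟨⟨Y, hY⟩, -, hYA⟩
          simp only [Set.restrict] at hYA
          have hsq : (Y * Y).PosSemidef := by
            have := hY.pow 2; rwa [pow_two] at this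
          exact absurd (hYA ▸ hsq) hA
    rw [this]; exact him

lemma measurable_polarFactor {p k : ℕ} :
    Measurable (polarFactor : Matrix (Fin p) (Fin k) ℝ → Matrix (Fin p) (Fin k) ℝ) := by
  have heq : (polarFactor : Matrix (Fin p) (Fin k) ℝ → Matrix (Fin p) (Fin k) ℝ)
      = fun X => X * (sqrtFun (Xᵀ * X))⁻¹ := by
    funext X
    rw [polarFactor, sqrtFun_eq (posSemidef_transpose_mul_self X)]
  rw [heq]
  have h1 : Measurable fun X : Matrix (Fin p) (Fin k) ℝ => Xᵀ * X :=
    (continuous_id.matrix_transpose.matrix_mul continuous_id).measurable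
  have h2 : Measurable fun X : Matrix (Fin p) (Fin k) ℝ => sqrtFun (Xᵀ * X) :=
    measurable_sqrtFun.comp h1
  have hinv : Measurable fun B : Matrix (Fin k) (Fin k) ℝ => B⁻¹ := by
    have : (fun B : Matrix (Fin k) (Fin k) ℝ => B⁻¹)
        = fun B => (B.det)⁻¹ • B.adjugate := by
      funext B
      rw [Matrix.inv_def, Ring.inverse_eq_inv']
    rw [this]
    exact (continuous_id.matrix_det.measurable.inv).smul
      continuous_id.matrix_adjugate.measurable
  have h3 : Measurable fun X : Matrix (Fin p) (Fin k) ℝ => (sqrtFun (Xᵀ * X))⁻¹ :=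
    hinv.comp h2
  exact ((continuous_fst.matrix_mul continuous_snd).measurable).comp
    (measurable_id.prodMk h3)

lemma sqrt_conj {k : ℕ} {A : Matrix (Fin k) (Fin k) ℝ} (hA : A.PosSemidef)
    {R : Matrix (Fin k) (Fin k) ℝ} (hR1 : Rᵀ * R = 1) (hR2 : R * Rᵀ = 1)
    (hc : (Rᵀ * A * R).PosSemidef) :
    CFC.sqrt (Rᵀ * A * R) = Rᵀ * CFC.sqrt A * R := by
  have hpsd : (Rᵀ * CFC.sqrt A * R).PosSemidef := by
    have := (CFC.sqrt_nonneg A).posSemidef.mul_mul_conjTranspose_same Rᵀ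
    simpa [Matrix.conjTranspose_eq_transpose_of_trivial] using this
  refine CFC.sqrt_unique ?_ hpsd.nonneg
  calc Rᵀ * CFC.sqrt A * R * (Rᵀ * CFC.sqrt A * R)
      = Rᵀ * CFC.sqrt A * (R * Rᵀ) * CFC.sqrt A * R := by
        simp only [Matrix.mul_assoc]
    _ = Rᵀ * A * R := by
        rw [hR2, Matrix.mul_one]
        rw [show Rᵀ * CFC.sqrt A * CFC.sqrt A * R = Rᵀ * (CFC.sqrt A * CFC.sqrt A) * R by
          simp [Matrix.mul_assoc], CFC.sqrt_mul_sqrt_self A hA.nonneg]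

lemma sqrt_congr {k : ℕ} {A B : Matrix (Fin k) (Fin k) ℝ} (h : A = B)
    (hA : A.PosSemidef) (hB : B.PosSemidef) : CFC.sqrt A = CFC.sqrt B := by subst h; rfl

lemma polarFactor_conj {p k : ℕ} (X : Matrix (Fin p) (Fin k) ℝ)
    (hXpd : (Xᵀ * X).PosDef)
    {L : Matrix (Fin p) (Fin p) ℝ} (hL1 : Lᵀ * L = 1)
    {R : Matrix (Fin k) (Fin k) ℝ} (hR1 : Rᵀ * R = 1) (hR2 : R * Rᵀ = 1) :
    polarFactor (L * X * R) = L * polarFactor X * R := by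
  have hT : (L * X * R)ᵀ * (L * X * R) = Rᵀ * (Xᵀ * X) * R := by
    simp only [Matrix.transpose_mul, Matrix.mul_assoc]
    rw [show Lᵀ * (L * (X * R)) = (Lᵀ * L) * (X * R) by simp [Matrix.mul_assoc], hL1]
    simp [Matrix.mul_assoc]
  have hc : (Rᵀ * (Xᵀ * X) * R).PosSemidef := hT ▸ posSemidef_transpose_mul_self (L * X * R)
  have hsqrt : CFC.sqrt ((L * X * R)ᵀ * (L * X * R))
      = Rᵀ * CFC.sqrt (Xᵀ * X) * R := by
    rw [sqrt_congr hT (posSemidef_transpose_mul_self (L * X * R)) hc]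
    exact sqrt_conj (posSemidef_transpose_mul_self X) hR1 hR2 hc
  rw [polarFactor, hsqrt, Matrix.mul_inv_rev, Matrix.mul_inv_rev]
  rw [Matrix.inv_eq_left_inv hR1, Matrix.inv_eq_left_inv hR2]
  simp only [Matrix.mul_assoc]
  rw [show R * (Rᵀ * ((CFC.sqrt (Xᵀ * X))⁻¹ * R))
      = (CFC.sqrt (Xᵀ * X))⁻¹ * R from by
    rw [← Matrix.mul_assoc, hR2, Matrix.one_mul]]
  rw [polarFactor]
  simp only [Matrix.mul_assoc]

end PolarAux

/-- Let `X` be a random real `p × k` matrix with `XᵀX` positive definite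
almost surely, and let `L`, `R` be fixed orthogonal matrices such that `LXR` has the same
distribution as `X`. Then `L Q_X R` has the same distribution as `Q_X`. -/
theorem polarFactor_distribution_invariance {p k : ℕ}
    {Ω : Type*} [MeasurableSpace Ω] (μ : Measure Ω) [IsProbabilityMeasure μ]
    (X : Ω → Matrix (Fin p) (Fin k) ℝ) (hXmeas : Measurable X)
    (hXpd : ∀ᵐ ω ∂μ, ((X ω)ᵀ * X ω).PosDef)
    (L : Matrix (Fin p) (Fin p) ℝ) (hL : L ∈ Matrix.orthogonalGroup (Fin p) ℝ)
    (R : Matrix (Fin k) (Fin k) ℝ) (hR : R ∈ Matrix.orthogonalGroup (Fin k) ℝ)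
    (hinv : Measure.map (fun ω => L * X ω * R) μ = Measure.map X μ) :
    Measure.map (fun ω => L * polarFactor (X ω) * R) μ
      = Measure.map (fun ω => polarFactor (X ω)) μ := by
  have hL1 : Lᵀ * L = 1 := by
    have h := (Matrix.mem_orthogonalGroup_iff' (Fin p) ℝ).mp hL
    exact h
  have hR1 : Rᵀ * R = 1 := by
    have h := (Matrix.mem_orthogonalGroup_iff' (Fin k) ℝ).mp hR
    exact h
  have hR2 : R * Rᵀ = 1 := by
    have h := (Matrix.mem_orthogonalGroup_iff (Fin k) ℝ).mp hR
    exact h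
  have hpolmeas : Measurable (polarFactor : Matrix (Fin p) (Fin k) ℝ → _) :=
    PolarAux.measurable_polarFactor
  have hcmeas : Measurable fun ω => L * X ω * R :=
    ((continuous_const.matrix_mul continuous_id).matrix_mul continuous_const).measurable.comp
      hXmeas
  have hae : (fun ω => L * polarFactor (X ω) * R) =ᵐ[μ] fun ω => polarFactor (L * X ω * R) := by
    filter_upwards [hXpd] with ω hω
    exact (PolarAux.polarFactor_conj (X ω) hω hL1 hR1 hR2).symm
  calc Measure.map (fun ω => L * polarFactor (X ω) * R) μ
      = Measure.map (fun ω => polarFactor (L * X ω * R)) μ := Measure.map_congr hae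
    _ = Measure.map polarFactor (Measure.map (fun ω => L * X ω * R) μ) :=
        (Measure.map_map hpolmeas hcmeas).symm
    _ = Measure.map polarFactor (Measure.map X μ) := by rw [hinv]
    _ = Measure.map (fun ω => polarFactor (X ω)) μ := Measure.map_map hpolmeas hXmeas
end

section
/- For every ℓ ∈ (0,1) and every real z ≠ 0, the Gaussian scale-mixture integral identity holds: ∫_0^1 √(ℓ/(2πθ)) · exp(−ℓz²/(2θ)) · θ^{ℓ/2−1}(1−θ)^{(1−ℓ)/2−1}/B(ℓ/2,(1−ℓ)/2) dθ = ((ℓ/2)^{ℓ/2}/Γ(ℓ/2)) · |z|^{ℓ−1} · exp(−ℓz²/2), where B is the Beta function and Γ the Gamma function. Equivalently: if θ ∼ Beta(ℓ/2,(1−ℓ)/2) and Z | θ ∼ Normal(0, θ/ℓ), then Z has density f(z|ℓ) = ((ℓ/2)^{ℓ/2}/Γ(ℓ/2))·|z|^{ℓ−1}·exp(−ℓz²/2). -/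
open Real MeasureTheory

/-- The real Beta function `B(a,b) = Γ(a)Γ(b)/Γ(a+b)`. -/
noncomputable def realBeta (a b : ℝ) : ℝ := Gamma a * Gamma b / Gamma (a + b)

/-- For `ℓ ∈ (0,1)` and `z ≠ 0`, the Gaussian scale-mixture identity
`∫_0^1 √(ℓ/(2πθ)) exp(−ℓz²/(2θ)) θ^{ℓ/2−1} (1−θ)^{(1−ℓ)/2−1} / B(ℓ/2,(1−ℓ)/2) dθ
  = ((ℓ/2)^{ℓ/2}/Γ(ℓ/2)) |z|^{ℓ−1} exp(−ℓz²/2)` holds: if `θ ∼ Beta(ℓ/2,(1−ℓ)/2)` and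
`Z | θ ∼ Normal(0, θ/ℓ)`, then `Z` has density `f(·|ℓ)`. -/
theorem gaussian_scale_mixture_density (ℓ : ℝ) (hℓ : ℓ ∈ Set.Ioo (0 : ℝ) 1)
    (z : ℝ) (hz : z ≠ 0) :
    ∫ θ in Set.Ioo (0 : ℝ) 1,
        Real.sqrt (ℓ / (2 * π * θ)) * Real.exp (-(ℓ * z ^ 2) / (2 * θ))
          * (θ ^ (ℓ / 2 - 1) * (1 - θ) ^ ((1 - ℓ) / 2 - 1)
              / realBeta (ℓ / 2) ((1 - ℓ) / 2))
      = (ℓ / 2) ^ (ℓ / 2) / Gamma (ℓ / 2) * |z| ^ (ℓ - 1)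
          * Real.exp (-(ℓ * z ^ 2) / 2) := by
  obtain ⟨hℓ0, hℓ1⟩ := hℓ
  have hπ : (0:ℝ) < π := Real.pi_pos
  have hz2 : (0:ℝ) < z ^ 2 := by positivity
  set c : ℝ := ℓ * z ^ 2 / 2 with hc_def
  have hc : 0 < c := by positivity
  set B : ℝ := realBeta (ℓ / 2) ((1 - ℓ) / 2) with hB_def
  have hG1 : 0 < Gamma (ℓ/2) := Real.Gamma_pos_of_pos (by linarith)
  have hG2 : 0 < Gamma ((1-ℓ)/2) := Real.Gamma_pos_of_pos (by linarith)
  have hBval : B = Gamma (ℓ/2) * Gamma ((1-ℓ)/2) / Real.sqrt π := by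
    have h3 : ℓ/2 + (1-ℓ)/2 = 1/2 := by ring
    rw [hB_def, realBeta, h3, Real.Gamma_one_half_eq]
  have hsπ : (0:ℝ) < Real.sqrt π := Real.sqrt_pos.mpr hπ
  have hB : 0 < B := by rw [hBval]; positivity
  set S : ℝ := Real.sqrt (ℓ / (2*π)) with hS_def
  set K : ℝ := S / B * Real.exp (-c) * c ^ ((ℓ-1)/2) with hK_def
  -- the change of variables map
  have himg : Set.Ioo (0:ℝ) 1 = (fun t => c / (c + t)) '' Set.Ioi 0 := by
    ext θ
    simp only [Set.mem_image, Set.mem_Ioo, Set.mem_Ioi]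
    constructor
    · rintro ⟨h0, h1⟩
      refine ⟨c * (1 - θ) / θ, div_pos (mul_pos hc (by linarith)) h0, ?_⟩
      have h2 : c + c * (1 - θ) / θ = c / θ := by field_simp; ring
      rw [h2, div_div_eq_mul_div, mul_comm, mul_div_assoc, div_self hc.ne', mul_one]
    · rintro ⟨t, ht, rfl⟩
      have hu : 0 < c + t := by linarith
      exact ⟨by positivity, by rw [div_lt_one hu]; linarith⟩
  have hderiv : ∀ t ∈ Set.Ioi (0:ℝ),
      HasDerivWithinAt (fun t => c / (c + t)) (-(c / (c + t)^2)) (Set.Ioi 0) t := by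
    intro t ht
    have hu : (0:ℝ) < c + t := by have := Set.mem_Ioi.mp ht; linarith
    have h1 : HasDerivAt (fun t : ℝ => c + t) 1 t := (hasDerivAt_id t).const_add c
    have h2 := (h1.inv hu.ne').const_mul c
    have h3 : -(c / (c + t)^2) = c * (-1 / (c + t) ^ 2) := by ring
    have heq : (fun s : ℝ => c / (c + s)) = fun s => c * (c + s)⁻¹ := by
      funext x; rw [div_eq_mul_inv]
    rw [h3, heq]
    exact h2.hasDerivWithinAt
  have hinj : Set.InjOn (fun t => c / (c + t)) (Set.Ioi 0) := by
    intro a ha b hb h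
    have ha' : (0:ℝ) < c + a := by have := Set.mem_Ioi.mp ha; linarith
    have hb' : (0:ℝ) < c + b := by have := Set.mem_Ioi.mp hb; linarith
    simp only at h
    rw [div_eq_div_iff ha'.ne' hb'.ne'] at h
    have := mul_left_cancel₀ hc.ne' (by linarith : c * (c + b) = c * (c + a))
    linarith
  rw [himg, MeasureTheory.integral_image_eq_integral_abs_deriv_smul measurableSet_Ioi hderiv hinj]
  have hpt : Set.EqOn
      (fun t => |(-(c / (c + t)^2))| • (Real.sqrt (ℓ / (2 * π * (c / (c + t)))) *
          Real.exp (-(ℓ * z ^ 2) / (2 * (c / (c + t)))) *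
          ((c / (c + t)) ^ (ℓ / 2 - 1) * (1 - c / (c + t)) ^ ((1 - ℓ) / 2 - 1) / B)))
      (fun t => K * (Real.exp (-t) * t ^ ((1 - ℓ)/2 - 1)))
      (Set.Ioi 0) := by
    intro t ht
    have htp : (0:ℝ) < t := Set.mem_Ioi.mp ht
    have hu : (0:ℝ) < c + t := by linarith
    simp only [smul_eq_mul]
    have habs : |(-(c / (c + t)^2))| = c / (c + t)^2 := by
      rw [abs_neg, abs_of_pos (by positivity)]
    have harg : ℓ / (2 * π * (c / (c + t))) = (ℓ / (2*π)) * ((c + t)/c) := by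
      field_simp
    have hsq : Real.sqrt ((ℓ / (2*π)) * ((c + t)/c)) = S * Real.sqrt ((c+t)/c) := by
      rw [Real.sqrt_mul (by positivity)]
    have hexparg : -(ℓ * z ^ 2) / (2 * (c / (c + t))) = -(c + t) := by
      have h2c : ℓ * z ^ 2 = 2 * c := by rw [hc_def]; ring
      rw [h2c]; field_simp
    have hone : 1 - c / (c + t) = t / (c + t) := by field_simp; ring
    rw [habs, harg, hsq, hexparg, hone]
    -- now convert all powers to exponentials
    have e1 : c / (c + t)^2 = Real.exp (Real.log c - 2 * Real.log (c + t)) := by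
      rw [Real.exp_sub, Real.exp_log hc,
        show (2:ℝ) * Real.log (c+t) = Real.log ((c+t)^2) by
          rw [Real.log_pow]; push_cast; ring,
        Real.exp_log (by positivity)]
    have e2 : Real.sqrt ((c+t)/c) = Real.exp ((Real.log (c+t) - Real.log c) * (1/2)) := by
      rw [Real.sqrt_eq_rpow, Real.rpow_def_of_pos (by positivity),
        Real.log_div hu.ne' hc.ne']
    have e3 : (c / (c + t)) ^ (ℓ / 2 - 1) =
        Real.exp ((Real.log c - Real.log (c+t)) * (ℓ/2 - 1)) := by
      rw [Real.rpow_def_of_pos (by positivity), Real.log_div hc.ne' hu.ne']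
    have e4 : (t / (c + t)) ^ ((1 - ℓ) / 2 - 1) =
        Real.exp ((Real.log t - Real.log (c+t)) * ((1-ℓ)/2 - 1)) := by
      rw [Real.rpow_def_of_pos (by positivity), Real.log_div htp.ne' hu.ne']
    have e5 : c ^ ((ℓ-1)/2) = Real.exp (Real.log c * ((ℓ-1)/2)) :=
      Real.rpow_def_of_pos hc _
    have e6 : t ^ ((1-ℓ)/2 - 1) = Real.exp (Real.log t * ((1-ℓ)/2 - 1)) :=
      Real.rpow_def_of_pos htp _
    rw [e1, e2, e3, e4, hK_def, e5, e6]
    have hsum : (Real.log c - 2 * Real.log (c + t)) + (Real.log (c+t) - Real.log c) * (1/2)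
        + (-(c+t)) + ((Real.log c - Real.log (c+t)) * (ℓ/2 - 1))
        + ((Real.log t - Real.log (c+t)) * ((1-ℓ)/2 - 1))
        = (-c) + Real.log c * ((ℓ-1)/2) + (-t) + Real.log t * ((1-ℓ)/2 - 1) := by ring
    calc Real.exp (Real.log c - 2 * Real.log (c + t)) *
          (S * Real.exp ((Real.log (c+t) - Real.log c) * (1/2)) * Real.exp (-(c+t)) *
            (Real.exp ((Real.log c - Real.log (c+t)) * (ℓ/2 - 1)) *
              Real.exp ((Real.log t - Real.log (c+t)) * ((1-ℓ)/2 - 1)) / B))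
        = S / B * Real.exp ((Real.log c - 2 * Real.log (c + t))
            + (Real.log (c+t) - Real.log c) * (1/2) + (-(c+t))
            + ((Real.log c - Real.log (c+t)) * (ℓ/2 - 1))
            + ((Real.log t - Real.log (c+t)) * ((1-ℓ)/2 - 1))) := by
          rw [Real.exp_add, Real.exp_add, Real.exp_add, Real.exp_add]; ring
      _ = S / B * Real.exp ((-c) + Real.log c * ((ℓ-1)/2) + (-t)
            + Real.log t * ((1-ℓ)/2 - 1)) := by rw [hsum]
      _ = S / B * Real.exp (-c) * Real.exp (Real.log c * ((ℓ-1)/2)) *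
            (Real.exp (-t) * Real.exp (Real.log t * ((1-ℓ)/2 - 1))) := by
          rw [Real.exp_add, Real.exp_add, Real.exp_add]; ring
  rw [MeasureTheory.setIntegral_congr_fun measurableSet_Ioi hpt,
    MeasureTheory.integral_const_mul, ← Real.Gamma_eq_integral (by linarith : (0:ℝ) < (1-ℓ)/2)]
  -- final constant computation
  have hce : Real.exp (-(ℓ * z ^ 2) / 2) = Real.exp (-c) := by
    rw [hc_def]; ring_nf
  have hcp : c ^ ((ℓ-1)/2) = (ℓ/2) ^ ((ℓ-1)/2) * |z| ^ (ℓ-1) := by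
    have hcc : c = (ℓ/2) * z^2 := by rw [hc_def]; ring
    rw [hcc, Real.mul_rpow (by linarith) (sq_nonneg z), ← sq_abs,
      ← Real.rpow_natCast |z| 2, ← Real.rpow_mul (abs_nonneg z)]
    congr 2
    push_cast
    ring
  have hSv : S = (ℓ/2) ^ ((1:ℝ)/2) / Real.sqrt π := by
    rw [hS_def, show ℓ / (2*π) = (ℓ/2)/π by ring,
      Real.sqrt_div (by linarith : (0:ℝ) ≤ ℓ/2), Real.sqrt_eq_rpow]
  have hpow : (ℓ/2) ^ ((1:ℝ)/2) * (ℓ/2) ^ ((ℓ-1)/2) = (ℓ/2) ^ (ℓ/2) := by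
    rw [← Real.rpow_add (by linarith : (0:ℝ) < ℓ/2)]
    norm_num
    ring_nf
  rw [hK_def, hce, hcp, hSv, hBval]
  field_simp
  rw [← hpow]
end

section
/- For every ℓ ∈ (0,1], a random variable with density f(·|ℓ) has mean zero, unit variance, and fourth moment 1 + 2/ℓ; that is, ∫_ℝ z·f(z|ℓ) dz = 0, ∫_ℝ z²·f(z|ℓ) dz = 1, and ∫_ℝ z⁴·f(z|ℓ) dz = 1 + 2/ℓ (in particular all these integrals are finite). -/
open Real MeasureTheory Set


lemma integrable_abs_rpow_mul_exp_neg_mul_sq {b : ℝ} (hb : 0 < b) {s : ℝ} (hs : -1 < s) :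
    Integrable fun x : ℝ => |x| ^ s * exp (-b * x ^ 2) := by
  have hIoi : IntegrableOn (fun x : ℝ => |x| ^ s * exp (-b * x ^ 2)) (Ioi 0) :=
    (integrableOn_rpow_mul_exp_neg_mul_sq hb hs).congr_fun
      (fun x hx => by rw [abs_of_pos hx]) measurableSet_Ioi
  rw [← integrableOn_univ, ← Iic_union_Ioi (a := (0 : ℝ)), integrableOn_union]
  refine ⟨?_, hIoi⟩
  rw [← (Measure.measurePreserving_neg (volume : Measure ℝ)).integrableOn_comp_preimage
      (Homeomorph.neg ℝ).measurableEmbedding]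
  simp only [Function.comp_def, abs_neg, neg_sq, neg_preimage, neg_Iic, neg_zero]
  rw [integrableOn_Ici_iff_integrableOn_Ioi]
  exact hIoi

lemma integral_abs_rpow_mul_exp_neg_mul_sq {b : ℝ} (hb : 0 < b) {s : ℝ} (hs : -1 < s) :
    ∫ x : ℝ, |x| ^ s * exp (-b * x ^ 2) = b ^ (-(s + 1) / 2) * Gamma ((s + 1) / 2) := by
  have h : (fun x : ℝ => |x| ^ s * exp (-b * x ^ 2))
      = fun x : ℝ => (fun y : ℝ => y ^ s * exp (-b * y ^ 2)) |x| := by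
    funext x; simp [sq_abs]
  rw [h, integral_comp_abs (f := fun y : ℝ => y ^ s * exp (-b * y ^ 2))]
  have : ∫ x in Ioi (0:ℝ), x ^ s * exp (-b * x ^ 2)
      = b ^ (-(s + 1) / 2) * (1 / 2) * Gamma ((s + 1) / 2) := by
    simp_rw [← Real.rpow_two]
    exact integral_rpow_mul_exp_neg_mul_rpow two_pos hs hb
  rw [this]; ring

/-- The density `f(z | ℓ) = ((ℓ/2)^{ℓ/2}/Γ(ℓ/2)) |z|^{ℓ−1} exp(−ℓz²/2)` of the proposed
shrinkage prior. -/
noncomputable def shrinkageDensity (ℓ z : ℝ) : ℝ :=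
  (ℓ / 2) ^ (ℓ / 2) / Gamma (ℓ / 2) * |z| ^ (ℓ - 1) * Real.exp (-(ℓ * z ^ 2) / 2)

/-- For every `ℓ ∈ (0,1]`, a random variable with density `f(·|ℓ)` has mean
zero, unit variance, and fourth moment `1 + 2/ℓ`; all of these moment integrals are finite. -/
theorem moments_shrinkageDensity (ℓ : ℝ) (hℓ : ℓ ∈ Set.Ioc (0 : ℝ) 1) :
    Integrable (fun z : ℝ => z * shrinkageDensity ℓ z) ∧
      (∫ z : ℝ, z * shrinkageDensity ℓ z) = 0 ∧
    Integrable (fun z : ℝ => z ^ 2 * shrinkageDensity ℓ z) ∧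
      (∫ z : ℝ, z ^ 2 * shrinkageDensity ℓ z) = 1 ∧
    Integrable (fun z : ℝ => z ^ 4 * shrinkageDensity ℓ z) ∧
      (∫ z : ℝ, z ^ 4 * shrinkageDensity ℓ z) = 1 + 2 / ℓ := by
  obtain ⟨hℓ0, hℓ1⟩ := hℓ
  set c : ℝ := (ℓ / 2) ^ (ℓ / 2) / Gamma (ℓ / 2) with hc
  have hb : (0 : ℝ) < ℓ / 2 := by linarith
  have hG : 0 < Gamma (ℓ / 2) := Gamma_pos_of_pos hb
  have hcpos : 0 < c := div_pos (rpow_pos_of_pos hb _) hG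
  have hexp : ∀ z : ℝ, Real.exp (-(ℓ * z ^ 2) / 2) = Real.exp (-(ℓ / 2) * z ^ 2) := by
    intro z; ring_nf
  -- key pointwise identity for even powers
  have key : ∀ k : ℕ, 0 < k → Even k →
      (fun z : ℝ => z ^ k * shrinkageDensity ℓ z)
        = fun z : ℝ => c * (|z| ^ (ℓ - 1 + (k : ℝ)) * exp (-(ℓ / 2) * z ^ 2)) := by
    intro k hk hke
    funext z
    rcases eq_or_ne z 0 with rfl | hz
    · have h1 : (0:ℝ) ^ k = 0 := zero_pow hk.ne'
      have h2 : ℓ - 1 + (k : ℝ) ≠ 0 := by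
        have h : (1 : ℝ) ≤ (k : ℝ) := by exact_mod_cast hk
        nlinarith
      simp [shrinkageDensity, h1, Real.zero_rpow h2]
    · have h1 : z ^ k = |z| ^ ((k : ℕ) : ℝ) := by
        rw [rpow_natCast, hke.pow_abs]
      have h2 : |z| ^ (ℓ - 1 + (k : ℝ)) = |z| ^ (ℓ - 1) * |z| ^ ((k : ℕ) : ℝ) :=
        rpow_add (abs_pos.mpr hz) _ _
      simp only [shrinkageDensity, ← hc, hexp z, h1, h2]
      ring
  have hs2 : (-1:ℝ) < ℓ - 1 + ((2:ℕ):ℝ) := by push_cast; linarith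
  have hs4 : (-1:ℝ) < ℓ - 1 + ((4:ℕ):ℝ) := by push_cast; linarith
  have hint2 : Integrable (fun z : ℝ => z ^ 2 * shrinkageDensity ℓ z) := by
    rw [key 2 two_pos even_two]
    exact (integrable_abs_rpow_mul_exp_neg_mul_sq hb hs2).const_mul c
  have hint4 : Integrable (fun z : ℝ => z ^ 4 * shrinkageDensity ℓ z) := by
    rw [key 4 (by norm_num) (by decide)]
    exact (integrable_abs_rpow_mul_exp_neg_mul_sq hb hs4).const_mul c
  -- odd moment integrability
  have hint1 : Integrable (fun z : ℝ => z * shrinkageDensity ℓ z) := by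
    refine Integrable.mono'
      ((integrable_abs_rpow_mul_exp_neg_mul_sq hb (by linarith : (-1:ℝ) < ℓ)).const_mul c)
      ?_ (Filter.Eventually.of_forall fun z => ?_)
    · apply Measurable.aestronglyMeasurable
      unfold shrinkageDensity
      fun_prop
    · rcases eq_or_ne z 0 with rfl | hz
      · simp only [shrinkageDensity, zero_mul, norm_zero]
        exact mul_nonneg hcpos.le
          (mul_nonneg (rpow_nonneg (abs_nonneg _) _) (exp_pos _).le)
      · have h1 : |z| * |z| ^ (ℓ - 1) = |z| ^ ℓ := by
          nth_rewrite 1 [← rpow_one |z|]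
          rw [← rpow_add (abs_pos.mpr hz)]
          norm_num
        have : ‖z * shrinkageDensity ℓ z‖
            = c * ((|z| * |z| ^ (ℓ - 1)) * exp (-(ℓ / 2) * z ^ 2)) := by
          simp only [shrinkageDensity, ← hc, hexp z, Real.norm_eq_abs, abs_mul,
            abs_of_nonneg hcpos.le, abs_of_nonneg (rpow_nonneg (abs_nonneg z) (ℓ - 1)),
            abs_of_nonneg (exp_pos (-(ℓ / 2) * z ^ 2)).le, abs_abs]
          ring
        rw [this, h1]
  -- odd moment integral is zero
  have hzero : (∫ z : ℝ, z * shrinkageDensity ℓ z) = 0 := by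
    have hodd : ∀ z : ℝ, (-z) * shrinkageDensity ℓ (-z) = -(z * shrinkageDensity ℓ z) := by
      intro z; simp [shrinkageDensity, neg_mul]
    have h0 : (∫ z : ℝ, z * shrinkageDensity ℓ z) = - ∫ z : ℝ, z * shrinkageDensity ℓ z := by
      calc (∫ z : ℝ, z * shrinkageDensity ℓ z)
          = ∫ z : ℝ, (-z) * shrinkageDensity ℓ (-z) :=
            (integral_neg_eq_self (fun z : ℝ => z * shrinkageDensity ℓ z) volume).symm
        _ = ∫ z : ℝ, -(z * shrinkageDensity ℓ z) := by simp_rw [hodd]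
        _ = - ∫ z : ℝ, z * shrinkageDensity ℓ z := integral_neg _
    linarith
  -- second moment
  have hval2 : (∫ z : ℝ, z ^ 2 * shrinkageDensity ℓ z) = 1 := by
    rw [key 2 two_pos even_two]
    rw [integral_const_mul, integral_abs_rpow_mul_exp_neg_mul_sq hb hs2]
    have he : (ℓ - 1 + ((2:ℕ):ℝ) + 1) / 2 = ℓ / 2 + 1 := by push_cast; ring
    rw [he, Gamma_add_one hb.ne']
    have hpow : (ℓ/2) ^ (ℓ/2) * (ℓ/2) ^ (-(ℓ - 1 + ((2:ℕ):ℝ) + 1) / 2) = (ℓ/2)⁻¹ := by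
      rw [← rpow_add hb, show ℓ/2 + -(ℓ - 1 + ((2:ℕ):ℝ) + 1) / 2 = -1 by push_cast; ring,
        rpow_neg_one]
    have : c * ((ℓ/2) ^ (-(ℓ - 1 + ((2:ℕ):ℝ) + 1) / 2) * (ℓ/2 * Gamma (ℓ/2)))
        = ((ℓ/2) ^ (ℓ/2) * (ℓ/2) ^ (-(ℓ - 1 + ((2:ℕ):ℝ) + 1) / 2)) * (ℓ/2)
          * (Gamma (ℓ/2) / Gamma (ℓ/2)) := by
      rw [hc]; ring
    rw [this, hpow, div_self hG.ne']
    field_simp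
  -- fourth moment
  have hval4 : (∫ z : ℝ, z ^ 4 * shrinkageDensity ℓ z) = 1 + 2 / ℓ := by
    rw [key 4 (by norm_num) (by decide)]
    rw [integral_const_mul, integral_abs_rpow_mul_exp_neg_mul_sq hb hs4]
    have he : (ℓ - 1 + ((4:ℕ):ℝ) + 1) / 2 = (ℓ / 2 + 1) + 1 := by push_cast; ring
    rw [he, Gamma_add_one (by positivity : ℓ/2 + 1 ≠ 0), Gamma_add_one hb.ne']
    have hpow : (ℓ/2) ^ (ℓ/2) * (ℓ/2) ^ (-(ℓ - 1 + ((4:ℕ):ℝ) + 1) / 2) = ((ℓ/2) ^ 2)⁻¹ := by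
      rw [← rpow_add hb, show ℓ/2 + -(ℓ - 1 + ((4:ℕ):ℝ) + 1) / 2 = -2 by push_cast; ring]
      rw [show (-2:ℝ) = -((2:ℕ):ℝ) by norm_num, rpow_neg hb.le, rpow_natCast]
    have : c * ((ℓ/2) ^ (-(ℓ - 1 + ((4:ℕ):ℝ) + 1) / 2) * ((ℓ/2 + 1) * (ℓ/2 * Gamma (ℓ/2))))
        = ((ℓ/2) ^ (ℓ/2) * (ℓ/2) ^ (-(ℓ - 1 + ((4:ℕ):ℝ) + 1) / 2)) * ((ℓ/2 + 1) * (ℓ/2))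
          * (Gamma (ℓ/2) / Gamma (ℓ/2)) := by
      rw [hc]; ring
    rw [this, hpow, div_self hG.ne']
    field_simp
  exact ⟨hint1, hzero, hint2, hval2, hint4, hval4⟩
end
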